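/- Let δ ∈ [0,1] be real, and for a ∈ {0,1} let ρ_a be the 3×3 complex matrix ρ_a = δ·(e_a e_a†) + (1−δ)·(e_2 e_2†), where e_0, e_1, e_2 are the standard basis vectors of ℂ³ and e e† denotes the rank-one outer product. Then for all positive semidefinite 3×3 complex matrices M_0, M_1 with M_0 + M_1 = I (the identity), (1/2)·Re(tr(M_0 ρ_0)) + (1/2)·Re(tr(M_1 ρ_1)) ≤ 1/2 + δ/2. (This is the statement that dishonest Bob, holding the second register ρ_a, cannot guess a with probability more than 1/2 + δ/2; with δ = 2/√v this gives 1/2 + 1/√v.) -/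

import Mathlib

open Matrix
open scoped ComplexOrder

/-- The standard basis vectors of ℂ³. -/
noncomputable def e3 (a : Fin 3) : Fin 3 → ℂ := fun i => if i = a then 1 else 0

lemma diag_nonneg_aux {M : Matrix (Fin 3) (Fin 3) ℂ} (h : M.PosSemidef) (i : Fin 3) :
    0 ≤ (M i i).re ∧ (M i i).im = 0 := by
  have h' := h.dotProduct_mulVec_nonneg (Pi.single i 1)
  have key : (0:ℂ) ≤ M i i := by
    simpa [dotProduct, Matrix.mulVec, Pi.single_apply] using h'
  rw [Complex.le_def] at key
  exact ⟨key.1, key.2.symm⟩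

/-- No two-outcome POVM distinguishes `ρ_0` and `ρ_1` with probability
better than `1/2 + δ/2`. -/
theorem stmt_1 (δ : ℝ) (hδ0 : 0 ≤ δ) (hδ1 : δ ≤ 1)
    (M0 M1 : Matrix (Fin 3) (Fin 3) ℂ)
    (h0 : M0.PosSemidef) (h1 : M1.PosSemidef) (hsum : M0 + M1 = 1) :
    let outer : (Fin 3 → ℂ) → Matrix (Fin 3) (Fin 3) ℂ :=
      fun ψ => Matrix.vecMulVec ψ (star ψ)
    let ρ0 : Matrix (Fin 3) (Fin 3) ℂ :=
      (δ : ℂ) • outer (e3 0) + ((1 - δ : ℝ) : ℂ) • outer (e3 2)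
    let ρ1 : Matrix (Fin 3) (Fin 3) ℂ :=
      (δ : ℂ) • outer (e3 1) + ((1 - δ : ℝ) : ℂ) • outer (e3 2)
    (1 / 2) * ((M0 * ρ0).trace).re + (1 / 2) * ((M1 * ρ1).trace).re ≤ 1 / 2 + δ / 2 := by
  intro outer ρ0 ρ1
  have t0 : (M0 * ρ0).trace = (δ : ℂ) * M0 0 0 + ((1 - δ : ℝ) : ℂ) * M0 2 2 := by
    simp [ρ0, outer, Matrix.trace, Matrix.diag, Matrix.mul_apply, Matrix.vecMulVec_apply,
      e3, Fin.sum_univ_three]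
    ring
  have t1 : (M1 * ρ1).trace = (δ : ℂ) * M1 1 1 + ((1 - δ : ℝ) : ℂ) * M1 2 2 := by
    simp [ρ1, outer, Matrix.trace, Matrix.diag, Matrix.mul_apply, Matrix.vecMulVec_apply,
      e3, Fin.sum_univ_three]
    ring
  have hsum' : ∀ i : Fin 3, M0 i i + M1 i i = 1 := by
    intro i
    have := congrFun (congrFun hsum i) i
    simpa [Matrix.one_apply] using this
  obtain ⟨a0, _⟩ := diag_nonneg_aux h0 0
  obtain ⟨b0, _⟩ := diag_nonneg_aux h0 1
  obtain ⟨c0, _⟩ := diag_nonneg_aux h0 2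
  obtain ⟨a1, _⟩ := diag_nonneg_aux h1 0
  obtain ⟨b1, _⟩ := diag_nonneg_aux h1 1
  obtain ⟨c1, _⟩ := diag_nonneg_aux h1 2
  have e0 : (M0 0 0).re + (M1 0 0).re = 1 := by
    have := congrArg Complex.re (hsum' 0); simpa using this
  have e1 : (M0 1 1).re + (M1 1 1).re = 1 := by
    have := congrArg Complex.re (hsum' 1); simpa using this
  have e2 : (M0 2 2).re + (M1 2 2).re = 1 := by
    have := congrArg Complex.re (hsum' 2); simpa using this
  rw [t0, t1]
  simp only [Complex.add_re, Complex.mul_re, Complex.ofReal_re, Complex.ofReal_im]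
  nlinarith [a0, b0, c0, a1, b1, c1]
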